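/- For real μ > 3 and A ≥ 1, the identity ∑_{k≥1} (1 - k²/A²)₊^μ = (1/(A^{2μ} B(4, μ-3))) · ∫₀^{A²-1} τ^{μ-4} (A² - τ)³ ∑_{k≥1} (1 - k²/(A²-τ))₊³ dτ holds, where B is the Euler Beta function. -/

import Mathlib

open Real MeasureTheory

/-- Euler Beta function `B(α,β) = ∫₀¹ s^(α-1) (1-s)^(β-1) ds`. -/
noncomputable def eulerBeta (a b : ℝ) : ℝ := ∫ s in (0:ℝ)..1, s ^ (a - 1) * (1 - s) ^ (b - 1)

lemma AL.integrable (μ : ℝ) (hμ : 3 < μ) (b c d : ℝ) :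
    IntervalIntegrable (fun τ => τ ^ (μ - 4) * (max (b - τ) 0) ^ (3:ℕ)) volume c d :=
  (intervalIntegral.intervalIntegrable_rpow' (by linarith)).mul_continuousOn
    (((((continuous_const.sub continuous_id).max continuous_const).pow 3)).continuousOn)

lemma AL.beta_eq (μ : ℝ) (hμ : 3 < μ) :
    eulerBeta 4 (μ - 3) = ∫ s in (0:ℝ)..1, s ^ (μ - 4) * (1 - s) ^ (3:ℕ) := by
  unfold eulerBeta
  have h1 : (∫ s in (0:ℝ)..1, s ^ ((4:ℝ) - 1) * (1 - s) ^ (μ - 3 - 1))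
      = ∫ s in (0:ℝ)..1, (fun t => t ^ (μ - 4) * (1 - t) ^ (3:ℕ)) (1 - s) := by
    apply intervalIntegral.integral_congr
    intro s hs
    have : s ^ ((4:ℝ) - 1) = s ^ (3:ℕ) := by
      rw [show (4:ℝ) - 1 = ((3:ℕ):ℝ) by norm_num, Real.rpow_natCast]
    simp only [this, sub_sub_cancel]
    ring_nf
  rw [h1, intervalIntegral.integral_comp_sub_left (fun t => t ^ (μ - 4) * (1 - t) ^ (3:ℕ)) 1]
  norm_num

lemma AL.beta_pos (μ : ℝ) (hμ : 3 < μ) :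
    0 < ∫ s in (0:ℝ)..1, s ^ (μ - 4) * (1 - s) ^ (3:ℕ) := by
  apply intervalIntegral.intervalIntegral_pos_of_pos_on
  · exact (intervalIntegral.intervalIntegrable_rpow' (by linarith)).mul_continuousOn
      ((((continuous_const.sub continuous_id).pow 3)).continuousOn)
  · intro x hx
    exact mul_pos (Real.rpow_pos_of_pos hx.1 _) (pow_pos (by linarith [hx.2]) 3)
  · norm_num

lemma AL.key (μ : ℝ) (hμ : 3 < μ) (b c : ℝ) (hbc : b ≤ c) (hc : 0 ≤ c) :
    (∫ τ in (0:ℝ)..c, τ ^ (μ - 4) * (max (b - τ) 0) ^ (3:ℕ))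
      = (max b 0) ^ μ * ∫ s in (0:ℝ)..1, s ^ (μ - 4) * (1 - s) ^ (3:ℕ) := by
  rcases le_or_gt b 0 with hb | hb
  · have h0 : Set.EqOn (fun τ => τ ^ (μ - 4) * (max (b - τ) 0) ^ (3:ℕ)) 0 (Set.uIcc 0 c) := by
      intro τ hτ
      rw [Set.uIcc_of_le hc] at hτ
      have : b - τ ≤ 0 := by linarith [hτ.1]
      simp [max_eq_right this]
    rw [intervalIntegral.integral_congr h0, max_eq_right hb,
      Real.zero_rpow (by linarith), zero_mul]
    simp
  · -- 0 < b
    have hsplit := intervalIntegral.integral_add_adjacent_intervals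
      (AL.integrable μ hμ b 0 b) (AL.integrable μ hμ b b c)
    have h2 : (∫ τ in b..c, τ ^ (μ - 4) * (max (b - τ) 0) ^ (3:ℕ)) = 0 := by
      have h0 : Set.EqOn (fun τ => τ ^ (μ - 4) * (max (b - τ) 0) ^ (3:ℕ)) 0 (Set.uIcc b c) := by
        intro τ hτ
        rw [Set.uIcc_of_le hbc] at hτ
        have : b - τ ≤ 0 := by linarith [hτ.1]
        simp [max_eq_right this]
      rw [intervalIntegral.integral_congr h0]
      simp
    have h1 : (∫ τ in (0:ℝ)..b, τ ^ (μ - 4) * (max (b - τ) 0) ^ (3:ℕ))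
        = ∫ τ in (0:ℝ)..b, (fun t => t ^ (μ - 4) * (b - t) ^ (3:ℕ)) τ := by
      apply intervalIntegral.integral_congr
      intro τ hτ
      rw [Set.uIcc_of_le hb.le] at hτ
      have : (0:ℝ) ≤ b - τ := by linarith [hτ.2]
      simp [max_eq_left this]
    have hsub : b • (∫ s in (0:ℝ)..1, (fun t => t ^ (μ - 4) * (b - t) ^ (3:ℕ)) (b * s))
        = ∫ τ in (b * 0)..(b * 1), (fun t => t ^ (μ - 4) * (b - t) ^ (3:ℕ)) τ :=
      intervalIntegral.smul_integral_comp_mul_left (fun t => t ^ (μ - 4) * (b - t) ^ (3:ℕ)) b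
    have hpt : (∫ s in (0:ℝ)..1, (fun t => t ^ (μ - 4) * (b - t) ^ (3:ℕ)) (b * s))
        = ∫ s in (0:ℝ)..1, (b ^ (μ - 4) * b ^ (3:ℕ)) * (s ^ (μ - 4) * (1 - s) ^ (3:ℕ)) := by
      apply intervalIntegral.integral_congr
      intro s hs
      rw [Set.uIcc_of_le (by norm_num : (0:ℝ) ≤ 1)] at hs
      simp only
      rw [Real.mul_rpow hb.le hs.1, show b - b * s = b * (1 - s) by ring, mul_pow]
      ring
    norm_num at hsub
    rw [← hsplit, h2, add_zero, h1, ← hsub, hpt,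
      intervalIntegral.integral_const_mul, ← mul_assoc]
    congr 1
    rw [max_eq_left hb.le, ← Real.rpow_natCast b 3, ← Real.rpow_add hb, mul_comm,
      ← Real.rpow_add_one hb.ne']
    norm_num
    ring_nf

/-- The Aizenman–Lieb identity reducing a Riesz mean of order `μ > 3` to
Riesz means of order `3`. -/
theorem aizenman_lieb_identity (μ A : ℝ) (hμ : 3 < μ) (hA : 1 ≤ A) :
    (∑' k : ℕ, (max (1 - ((k : ℝ) + 1) ^ 2 / A ^ 2) 0) ^ μ)
      = 1 / (A ^ (2 * μ) * eulerBeta 4 (μ - 3)) *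
        ∫ τ in (0:ℝ)..(A ^ 2 - 1), τ ^ (μ - 4) * (A ^ 2 - τ) ^ 3 *
          ∑' k : ℕ, (max (1 - ((k : ℝ) + 1) ^ 2 / (A ^ 2 - τ)) 0) ^ (3:ℝ) := by
  have hA0 : (0:ℝ) < A := by linarith
  set N := ⌊A⌋₊ with hNdef
  have hAN : A < (N:ℝ) + 1 := Nat.lt_floor_add_one A
  have hA2 : (1:ℝ) ≤ A ^ 2 := by nlinarith
  have hc : (0:ℝ) ≤ A ^ 2 - 1 := by linarith
  have hμ0 : μ ≠ 0 := by linarith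
  have hvan : ∀ (x p : ℝ), 0 < x → x ≤ A ^ 2 → p ≠ 0 → ∀ k ∉ Finset.range N,
      (max (1 - ((k:ℝ)+1)^2 / x) 0) ^ p = 0 := by
    intro x p hx hxA hp k hk
    rw [Finset.mem_range, not_lt] at hk
    have hk' : (N:ℝ) ≤ (k:ℝ) := Nat.cast_le.mpr hk
    have h1 : A < (k:ℝ) + 1 := by linarith
    have h2 : x < ((k:ℝ)+1)^2 := by nlinarith
    have h3 : 1 - ((k:ℝ)+1)^2 / x ≤ 0 := by
      have := (one_lt_div hx).mpr h2
      linarith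
    rw [max_eq_right h3, Real.zero_rpow hp]
  have hLHS : (∑' k : ℕ, (max (1 - ((k:ℝ)+1)^2 / A^2) 0) ^ μ)
      = ∑ k ∈ Finset.range N, (max (1 - ((k:ℝ)+1)^2 / A^2) 0) ^ μ :=
    tsum_eq_sum (hvan (A^2) μ (by linarith) le_rfl hμ0)
  have hint : Set.EqOn
      (fun τ => τ ^ (μ-4) * (A^2 - τ)^3 *
        ∑' k : ℕ, (max (1 - ((k:ℝ)+1)^2/(A^2-τ)) 0)^(3:ℝ))
      (fun τ => ∑ k ∈ Finset.range N,
        τ ^ (μ-4) * (max ((A^2 - ((k:ℝ)+1)^2) - τ) 0)^(3:ℕ))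
      (Set.uIcc 0 (A^2-1)) := by
    intro τ hτ
    rw [Set.uIcc_of_le hc] at hτ
    obtain ⟨hτ0, hτ1⟩ := hτ
    have hx : (0:ℝ) < A^2 - τ := by linarith
    simp only
    rw [tsum_eq_sum (hvan (A^2-τ) 3 hx (by linarith) (by norm_num)), Finset.mul_sum]
    apply Finset.sum_congr rfl
    intro k _
    have h3 : (A^2-τ) * (1 - ((k:ℝ)+1)^2/(A^2-τ)) = (A^2 - ((k:ℝ)+1)^2) - τ := by
      field_simp
      ring
    rw [show (3:ℝ) = ((3:ℕ):ℝ) by norm_num, Real.rpow_natCast, mul_assoc, ← mul_pow,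
      mul_max_of_nonneg _ _ hx.le, mul_zero, h3]
  have hB := AL.beta_pos μ hμ
  set B := ∫ s in (0:ℝ)..1, s ^ (μ-4) * (1-s)^(3:ℕ) with hBdef
  have hX : (0:ℝ) < A ^ (2*μ) := Real.rpow_pos_of_pos hA0 _
  have hpow : ((A^2:ℝ)) ^ μ = A ^ (2*μ) := by
    rw [← Real.rpow_natCast A 2, ← Real.rpow_mul hA0.le]
    norm_num
  have hkey : ∀ k ∈ Finset.range N,
      (∫ τ in (0:ℝ)..(A^2-1), τ^(μ-4) * (max ((A^2-((k:ℝ)+1)^2) - τ) 0)^(3:ℕ))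
        = (max (A^2-((k:ℝ)+1)^2) 0)^μ * B := by
    intro k _
    have hk0 : (0:ℝ) ≤ (k:ℝ) := Nat.cast_nonneg k
    exact AL.key μ hμ _ _ (by nlinarith) hc
  have hterm : ∀ k ∈ Finset.range N, (max (1 - ((k:ℝ)+1)^2/A^2) 0)^μ
      = (max (A^2-((k:ℝ)+1)^2) 0)^μ / A^(2*μ) := by
    intro k _
    have hA2' : (0:ℝ) < A^2 := by linarith
    have h1 : max (1 - ((k:ℝ)+1)^2/A^2) 0 = (max (A^2-((k:ℝ)+1)^2) 0) / A^2 := by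
      rw [← max_div_div_right hA2'.le]
      congr 1
      · field_simp
      · rw [zero_div]
    rw [h1, Real.div_rpow (le_max_right _ _) hA2'.le, hpow]
  rw [hLHS, AL.beta_eq μ hμ, ← hBdef, intervalIntegral.integral_congr hint,
    intervalIntegral.integral_finset_sum (fun k _ => AL.integrable μ hμ _ 0 (A^2-1)),
    Finset.sum_congr rfl hkey, Finset.sum_congr rfl hterm, ← Finset.sum_div,
    ← Finset.sum_mul]
  field_simp
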